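/- The translation-reduced three-body Hamiltonian expressed in the new coordinates equals the partially reduced Hamiltonian: for every point z in the domain of Φ, H_old(Φ(z)) = (1/(2ν₁))(p₁² + p₂² + f̃(q₃,q₄)) + (1/(2ν₂))(p₃² + p₄² + f̃(q₁,q₂)) + V(q₁²+q₂², q₃²+q₄², q₁q₃+q₂q₄), where H_old(x₁,x₂,y₁,y₂) = ‖y₁‖²/(2ν₁) + ‖y₂‖²/(2ν₂) + V(‖x₁‖², ‖x₂‖², x₁·x₂) and f̃(q_i,q_j) = (q_iB − q_j p_ψ₁/(2A))² + (−q_jC + q_i p_ψ₂/(2A))². In particular the right-hand side is independent of the angles θ₁ and θ₂. -/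

import Mathlib

open Matrix Real

noncomputable section

/-- `B_ij = E_ij - E_ji`. -/
def Bmat (i j : Fin 4) : Matrix (Fin 4) (Fin 4) ℝ :=
  Matrix.single i j 1 - Matrix.single j i 1

/-- `M = M_θ M_ψ = exp(θ₁B₁₂)exp(θ₂B₃₄)exp(ψ₁B₁₃)exp(ψ₂B₂₄) ∈ SO(4)`. -/
def Mrot (θ₁ θ₂ ψ₁ ψ₂ : ℝ) : Matrix (Fin 4) (Fin 4) ℝ :=
  NormedSpace.exp (θ₁ • Bmat 0 1) * NormedSpace.exp (θ₂ • Bmat 2 3) *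
    (NormedSpace.exp (ψ₁ • Bmat 0 2) * NormedSpace.exp (ψ₂ • Bmat 1 3))

/-- The transformation `Φ`, sending the new coordinates
`(q₁,q₂,q₃,q₄,ψ₁,ψ₂,θ₁,θ₂,p₁,p₂,p₃,p₄,p_ψ₁,p_ψ₂,p_θ₁,p_θ₂)` (indices 0,…,15 of `z`)
to `(x₁,x₂,y₁,y₂) ∈ (ℝ⁴)⁴`. -/
def Phi (z : Fin 16 → ℝ) :
    (Fin 4 → ℝ) × (Fin 4 → ℝ) × (Fin 4 → ℝ) × (Fin 4 → ℝ) :=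
  let q₁ := z 0; let q₂ := z 1; let q₃ := z 2; let q₄ := z 3
  let ψ₁ := z 4; let ψ₂ := z 5; let θ₁ := z 6; let θ₂ := z 7
  let p₁ := z 8; let p₂ := z 9; let p₃ := z 10; let p₄ := z 11
  let pψ₁ := z 12; let pψ₂ := z 13; let pθ₁ := z 14; let pθ₂ := z 15
  let A := (q₁ * q₄ - q₂ * q₃) / 2
  let L₃ := q₁ * p₂ - q₂ * p₁ + q₃ * p₄ - q₄ * p₃
  let B := (L₃ * sin (2 * ψ₁) + 2 * (pθ₁ * sin ψ₁ * cos ψ₂ + pθ₂ * cos ψ₁ * sin ψ₂)) /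
      (2 * A * (cos (2 * ψ₁) - cos (2 * ψ₂)))
  let C := (L₃ * sin (2 * ψ₂) + 2 * (pθ₁ * cos ψ₁ * sin ψ₂ + pθ₂ * sin ψ₁ * cos ψ₂)) /
      (2 * A * (cos (2 * ψ₁) - cos (2 * ψ₂)))
  let α₁ := q₃ * B - q₄ * pψ₁ / (2 * A)
  let α₂ := -q₄ * C + q₃ * pψ₂ / (2 * A)
  let α₃ := -q₁ * B + q₂ * pψ₁ / (2 * A)
  let α₄ := q₂ * C - q₁ * pψ₂ / (2 * A)
  let M := Mrot θ₁ θ₂ ψ₁ ψ₂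
  (M.mulVec ![q₁, q₂, 0, 0], M.mulVec ![q₃, q₄, 0, 0],
   M.mulVec ![p₁, p₂, α₁, α₂], M.mulVec ![p₃, p₄, α₃, α₄])

/-- The translation-reduced Hamiltonian
`H_old(x₁,x₂,y₁,y₂) = ‖y₁‖²/(2ν₁) + ‖y₂‖²/(2ν₂) + V(‖x₁‖², ‖x₂‖², x₁·x₂)`. -/
def Hold (ν₁ ν₂ : ℝ) (V : (Fin 3 → ℝ) → ℝ)
    (w : (Fin 4 → ℝ) × (Fin 4 → ℝ) × (Fin 4 → ℝ) × (Fin 4 → ℝ)) : ℝ :=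
  let x₁ := w.1; let x₂ := w.2.1; let y₁ := w.2.2.1; let y₂ := w.2.2.2
  (∑ i, (y₁ i) ^ 2) / (2 * ν₁) + (∑ i, (y₂ i) ^ 2) / (2 * ν₂) +
    V ![∑ i, (x₁ i) ^ 2, ∑ i, (x₂ i) ^ 2, ∑ i, x₁ i * x₂ i]


lemma exp_Bmat_orth (θ : ℝ) (i j : Fin 4) :
    (NormedSpace.exp (θ • Bmat i j))ᵀ * NormedSpace.exp (θ • Bmat i j) = 1 := by
  have h : (θ • Bmat i j)ᵀ = -(θ • Bmat i j) := by
    ext a b; simp [Bmat, Matrix.single, and_comm]; ring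
  rw [← Matrix.exp_transpose, h, ← Matrix.exp_add_of_commute _ _ (Commute.neg_left (Commute.refl (θ • Bmat i j)))]
  simp

lemma mul_orth {A B : Matrix (Fin 4) (Fin 4) ℝ} (hA : Aᵀ * A = 1) (hB : Bᵀ * B = 1) :
    (A * B)ᵀ * (A * B) = 1 := by
  rw [transpose_mul, Matrix.mul_assoc, ← Matrix.mul_assoc Aᵀ, hA, Matrix.one_mul, hB]

lemma Mrot_orth (θ₁ θ₂ ψ₁ ψ₂ : ℝ) : (Mrot θ₁ θ₂ ψ₁ ψ₂)ᵀ * Mrot θ₁ θ₂ ψ₁ ψ₂ = 1 :=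
  mul_orth (mul_orth (exp_Bmat_orth _ _ _) (exp_Bmat_orth _ _ _))
    (mul_orth (exp_Bmat_orth _ _ _) (exp_Bmat_orth _ _ _))

lemma dp_pres (θ₁ θ₂ ψ₁ ψ₂ : ℝ) (v w : Fin 4 → ℝ) :
    ∑ i, (Mrot θ₁ θ₂ ψ₁ ψ₂).mulVec v i * (Mrot θ₁ θ₂ ψ₁ ψ₂).mulVec w i = ∑ i, v i * w i := by
  have h : (Mrot θ₁ θ₂ ψ₁ ψ₂).mulVec v ⬝ᵥ (Mrot θ₁ θ₂ ψ₁ ψ₂).mulVec w = v ⬝ᵥ w := by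
    rw [Matrix.dotProduct_mulVec, ← Matrix.mulVec_transpose, Matrix.mulVec_mulVec,
      Mrot_orth, Matrix.one_mulVec]
  simpa [dotProduct] using h

/-- In the new coordinates the Hamiltonian becomes the partially reduced Hamiltonian;
in particular it is independent of `θ₁` and `θ₂`. -/
theorem Hold_comp_Phi (ν₁ ν₂ : ℝ) (hν₁ : 0 < ν₁) (hν₂ : 0 < ν₂)
    (V : (Fin 3 → ℝ) → ℝ) (z : Fin 16 → ℝ)
    (hA : (z 0 * z 3 - z 1 * z 2) / 2 ≠ 0)
    (hψ : cos (2 * z 4) ≠ cos (2 * z 5)) :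
    Hold ν₁ ν₂ V (Phi z) =
      (let q₁ := z 0; let q₂ := z 1; let q₃ := z 2; let q₄ := z 3
       let ψ₁ := z 4; let ψ₂ := z 5
       let p₁ := z 8; let p₂ := z 9; let p₃ := z 10; let p₄ := z 11
       let pψ₁ := z 12; let pψ₂ := z 13; let pθ₁ := z 14; let pθ₂ := z 15
       let A := (q₁ * q₄ - q₂ * q₃) / 2
       let L₃ := q₁ * p₂ - q₂ * p₁ + q₃ * p₄ - q₄ * p₃
       let B := (L₃ * sin (2 * ψ₁) + 2 * (pθ₁ * sin ψ₁ * cos ψ₂ + pθ₂ * cos ψ₁ * sin ψ₂)) /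
           (2 * A * (cos (2 * ψ₁) - cos (2 * ψ₂)))
       let C := (L₃ * sin (2 * ψ₂) + 2 * (pθ₁ * cos ψ₁ * sin ψ₂ + pθ₂ * sin ψ₁ * cos ψ₂)) /
           (2 * A * (cos (2 * ψ₁) - cos (2 * ψ₂)))
       let ftilde : ℝ → ℝ → ℝ := fun qi qj =>
         (qi * B - qj * pψ₁ / (2 * A)) ^ 2 + (-qj * C + qi * pψ₂ / (2 * A)) ^ 2
       (1 / (2 * ν₁)) * (p₁ ^ 2 + p₂ ^ 2 + ftilde q₃ q₄) +
         (1 / (2 * ν₂)) * (p₃ ^ 2 + p₄ ^ 2 + ftilde q₁ q₂) +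
         V ![q₁ ^ 2 + q₂ ^ 2, q₃ ^ 2 + q₄ ^ 2, q₁ * q₃ + q₂ * q₄]) := by
  simp only [Hold, Phi]
  simp only [pow_two]
  rw [dp_pres, dp_pres, dp_pres, dp_pres, dp_pres]
  simp only [Fin.sum_univ_four, Matrix.cons_val_zero, Matrix.cons_val_one, Matrix.head_cons,
    Matrix.cons_val_two, Matrix.tail_cons, Matrix.cons_val_three, Matrix.head_fin_const]
  congr 1
  · ring
  · congr 1
    funext i
    fin_cases i <;> simp <;> ring

end
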